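/- Assume (A1). If M is a Pareto-optimal menu, then M^+ = {φ^+}; that is, φ^+ ∈ M and φ^+ is the unique u_L-maximizing point of M. -/

import Mathlib

open Finset

noncomputable section

/-- The product CSP `x ⊗ y`. -/
def prodCSP {m n : ℕ} (x : Fin m → ℝ) (y : Fin n → ℝ) : Fin m × Fin n → ℝ :=
  fun p => x p.1 * y p.2

/-- The `j`-th vertex `e_j` of a simplex. -/
def pureVec {k : ℕ} (j : Fin k) : Fin k → ℝ := fun j' => if j' = j then 1 else 0

/-- Linear extension of a payoff to CSPs. -/
def linCSP {m n : ℕ} (u : Fin m → Fin n → ℝ) (φ : Fin m × Fin n → ℝ) : ℝ :=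
  ∑ p : Fin m × Fin n, φ p * u p.1 p.2

/-- Payoff the learner would get by always deviating to the pure action `j'`. -/
def devCSP {m n : ℕ} (u : Fin m → Fin n → ℝ) (φ : Fin m × Fin n → ℝ) (j' : Fin n) : ℝ :=
  ∑ p : Fin m × Fin n, φ p * u p.1 j'

/-- Bilinear extension of a payoff to mixed strategies. -/
def mixPay {m n : ℕ} (u : Fin m → Fin n → ℝ) (x : Fin m → ℝ) (y : Fin n → ℝ) : ℝ :=
  ∑ i, ∑ j, x i * y j * u i j

/-- Pure best responses of the learner to the optimizer mixed strategy `x`. -/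
def BRL {m n : ℕ} (u : Fin m → Fin n → ℝ) (x : Fin m → ℝ) : Set (Fin n) :=
  {j | ∀ j' : Fin n, (∑ i, x i * u i j') ≤ ∑ i, x i * u i j}

/-- A CSP is no-regret. -/
def NoRegret {m n : ℕ} (u : Fin m → Fin n → ℝ) (φ : Fin m × Fin n → ℝ) : Prop :=
  ∀ j' : Fin n, devCSP u φ j' ≤ linCSP u φ

/-- A CSP is no-swap-regret. -/
def NoSwapRegret {m n : ℕ} (u : Fin m → Fin n → ℝ) (φ : Fin m × Fin n → ℝ) : Prop :=
  ∀ j j' : Fin n, (∑ i, φ (i, j) * u i j') ≤ ∑ i, φ (i, j) * u i j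

/-- The no-regret menu: all no-regret CSPs. -/
def MNR {m n : ℕ} (u : Fin m → Fin n → ℝ) : Set (Fin m × Fin n → ℝ) :=
  {φ | φ ∈ stdSimplex ℝ (Fin m × Fin n) ∧ NoRegret u φ}

/-- The no-swap-regret menu: all no-swap-regret CSPs. -/
def MNSR {m n : ℕ} (u : Fin m → Fin n → ℝ) : Set (Fin m × Fin n → ℝ) :=
  {φ | φ ∈ stdSimplex ℝ (Fin m × Fin n) ∧ NoSwapRegret u φ}

/-- A menu: a closed convex subset of the simplex of CSPs such that every optimizer
mixed strategy has some product response inside the set. -/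
def IsMenu {m n : ℕ} (M : Set (Fin m × Fin n → ℝ)) : Prop :=
  IsClosed M ∧ Convex ℝ M ∧ M ⊆ stdSimplex ℝ (Fin m × Fin n) ∧
    ∀ x ∈ stdSimplex ℝ (Fin m), ∃ y ∈ stdSimplex ℝ (Fin n), prodCSP x y ∈ M

/-- The learner's value when the optimizer with payoff `uO` picks their favorite point
of the menu `M`, breaking ties in the learner's favor. -/
def VL {m n : ℕ} (uL uO : Fin m → Fin n → ℝ) (M : Set (Fin m × Fin n → ℝ)) : ℝ :=
  sSup (linCSP uL '' {φ ∈ M | ∀ ψ ∈ M, linCSP uO ψ ≤ linCSP uO φ})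

/-- `M'` Pareto-dominates `M` (for the learner payoff `uL`). -/
def ParetoDominates {m n : ℕ} (uL : Fin m → Fin n → ℝ)
    (M' M : Set (Fin m × Fin n → ℝ)) : Prop :=
  (∀ uO : Fin m → Fin n → ℝ, VL uL uO M ≤ VL uL uO M') ∧
    ∃ uO : Fin m → Fin n → ℝ, VL uL uO M < VL uL uO M'

/-- A menu is Pareto-optimal if it is a menu and no menu Pareto-dominates it. -/
def ParetoOptimal {m n : ℕ} (uL : Fin m → Fin n → ℝ) (M : Set (Fin m × Fin n → ℝ)) : Prop :=
  IsMenu M ∧ ∀ M' : Set (Fin m × Fin n → ℝ), IsMenu M' → ¬ ParetoDominates uL M' M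

/-- (A2): no weakly dominated learner actions. -/
def A2cond {m n : ℕ} (u : Fin m → Fin n → ℝ) : Prop :=
  ∀ j : Fin n, (∃ x ∈ stdSimplex ℝ (Fin m), j ∈ BRL u x) →
    ∃ x' ∈ stdSimplex ℝ (Fin m), BRL u x' = {j}

/-- `U^-(M)`: the minimal learner utility over `M`. -/
def UminusVal {m n : ℕ} (u : Fin m → Fin n → ℝ) (M : Set (Fin m × Fin n → ℝ)) : ℝ :=
  sInf (linCSP u '' M)

/-- `U^+(M)`: the maximal learner utility over `M`. -/
def UplusVal {m n : ℕ} (u : Fin m → Fin n → ℝ) (M : Set (Fin m × Fin n → ℝ)) : ℝ :=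
  sSup (linCSP u '' M)

/-- `M^-`: the set of learner-utility-minimizing points of `M`. -/
def MminusSet {m n : ℕ} (u : Fin m → Fin n → ℝ) (M : Set (Fin m × Fin n → ℝ)) :
    Set (Fin m × Fin n → ℝ) :=
  {φ ∈ M | linCSP u φ = UminusVal u M}

/-- `M^+`: the set of learner-utility-maximizing points of `M`. -/
def MplusSet {m n : ℕ} (u : Fin m → Fin n → ℝ) (M : Set (Fin m × Fin n → ℝ)) :
    Set (Fin m × Fin n → ℝ) :=
  {φ ∈ M | linCSP u φ = UplusVal u M}

/-- The zero-sum value `U_ZS = min_x max_y u_L(x,y)`. -/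
def UZSval {m n : ℕ} (u : Fin m → Fin n → ℝ) : ℝ :=
  sInf ((fun x => sSup ((fun y => mixPay u x y) '' stdSimplex ℝ (Fin n))) ''
    stdSimplex ℝ (Fin m))

namespace ParetoAux

variable {m n : ℕ}

lemma pureVec_mem {k : ℕ} (j : Fin k) : pureVec j ∈ stdSimplex ℝ (Fin k) := by
  constructor
  · intro x; unfold pureVec; split <;> norm_num
  · simp [pureVec]

lemma prodCSP_pure_apply (istar : Fin m) (jstar : Fin n) (p : Fin m × Fin n) :
    prodCSP (pureVec istar) (pureVec jstar) p = if p = (istar, jstar) then 1 else 0 := by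
  obtain ⟨i, j⟩ := p
  by_cases h1 : i = istar <;> by_cases h2 : j = jstar <;>
    simp [prodCSP, pureVec, h1, h2, Prod.ext_iff]

lemma prodCSP_pure_mem (istar : Fin m) (jstar : Fin n) :
    prodCSP (pureVec istar) (pureVec jstar) ∈ stdSimplex ℝ (Fin m × Fin n) := by
  constructor
  · intro p; rw [prodCSP_pure_apply]; split <;> norm_num
  · simp [prodCSP_pure_apply, Finset.sum_ite_eq']

lemma linCSP_prodCSP_pure (u : Fin m → Fin n → ℝ) (istar : Fin m) (jstar : Fin n) :
    linCSP u (prodCSP (pureVec istar) (pureVec jstar)) = u istar jstar := by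
  unfold linCSP
  simp [prodCSP_pure_apply, ite_mul, Finset.sum_ite_eq']

lemma linCSP_le_max (uL : Fin m → Fin n → ℝ) (istar : Fin m) (jstar : Fin n)
    (hA1 : ∀ p : Fin m × Fin n, p ≠ (istar, jstar) → uL p.1 p.2 < uL istar jstar)
    {φ : Fin m × Fin n → ℝ} (hφ : φ ∈ stdSimplex ℝ (Fin m × Fin n)) :
    linCSP uL φ ≤ uL istar jstar := by
  have hle : ∀ p : Fin m × Fin n, uL p.1 p.2 ≤ uL istar jstar := by
    intro p
    by_cases hp : p = (istar, jstar)
    · subst hp; exact le_rfl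
    · exact (hA1 p hp).le
  calc linCSP uL φ ≤ ∑ p : Fin m × Fin n, φ p * uL istar jstar :=
        Finset.sum_le_sum fun p _ => mul_le_mul_of_nonneg_left (hle p) (hφ.1 p)
    _ = uL istar jstar := by rw [← Finset.sum_mul, hφ.2, one_mul]

lemma eq_phiplus_of_max (uL : Fin m → Fin n → ℝ) (istar : Fin m) (jstar : Fin n)
    (hA1 : ∀ p : Fin m × Fin n, p ≠ (istar, jstar) → uL p.1 p.2 < uL istar jstar)
    {φ : Fin m × Fin n → ℝ} (hφ : φ ∈ stdSimplex ℝ (Fin m × Fin n))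
    (heq : linCSP uL φ = uL istar jstar) :
    φ = prodCSP (pureVec istar) (pureVec jstar) := by
  have hsum : ∑ p : Fin m × Fin n, φ p * (uL istar jstar - uL p.1 p.2) = 0 := by
    have h : ∑ p : Fin m × Fin n, φ p * (uL istar jstar - uL p.1 p.2)
        = (∑ p : Fin m × Fin n, φ p) * uL istar jstar - linCSP uL φ := by
      unfold linCSP
      rw [Finset.sum_mul, ← Finset.sum_sub_distrib]
      exact Finset.sum_congr rfl fun p _ => by ring
    rw [h, hφ.2, one_mul, heq, sub_self]
  have hnn : ∀ p ∈ Finset.univ, (0:ℝ) ≤ φ p * (uL istar jstar - uL p.1 p.2) := by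
    intro p _
    by_cases hp : p = (istar, jstar)
    · subst hp; simp
    · exact mul_nonneg (hφ.1 p) (sub_nonneg.mpr (hA1 p hp).le)
  have hzero := (Finset.sum_eq_zero_iff_of_nonneg hnn).mp hsum
  have hoff : ∀ p : Fin m × Fin n, p ≠ (istar, jstar) → φ p = 0 := by
    intro p hp
    rcases mul_eq_zero.mp (hzero p (Finset.mem_univ p)) with h | h
    · exact h
    · exact absurd (sub_eq_zero.mp h) (hA1 p hp).ne'
  funext p
  rw [prodCSP_pure_apply]
  by_cases hp : p = (istar, jstar)
  · subst hp
    rw [if_pos rfl]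
    have h1 : ∑ q : Fin m × Fin n, φ q = 1 := hφ.2
    rw [← Finset.add_sum_erase _ _ (Finset.mem_univ (istar, jstar))] at h1
    have h0 : ∑ q ∈ Finset.univ.erase (istar, jstar), φ q = 0 :=
      Finset.sum_eq_zero fun q hq => hoff q (Finset.mem_erase.mp hq).1
    linarith
  · rw [if_neg hp]; exact hoff p hp

lemma linCSP_comb (u : Fin m → Fin n → ℝ) (t s : ℝ) (x y : Fin m × Fin n → ℝ) :
    linCSP u (t • x + s • y) = t * linCSP u x + s * linCSP u y := by
  simp only [linCSP, Pi.add_apply, Pi.smul_apply, smul_eq_mul, add_mul, mul_assoc]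
  rw [Finset.sum_add_distrib, ← Finset.mul_sum, ← Finset.mul_sum]

lemma linCSP_continuous (u : Fin m → Fin n → ℝ) : Continuous (linCSP u) := by
  unfold linCSP
  exact continuous_finset_sum _ fun p _ => (continuous_apply p).mul continuous_const

/-- The optimizer's argmax set inside `S`. -/
def argSet (uO : Fin m → Fin n → ℝ) (S : Set (Fin m × Fin n → ℝ)) :
    Set (Fin m × Fin n → ℝ) :=
  {φ ∈ S | ∀ ψ ∈ S, linCSP uO ψ ≤ linCSP uO φ}

lemma VL_eq (uL uO : Fin m → Fin n → ℝ) (S : Set (Fin m × Fin n → ℝ)) :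
    VL uL uO S = sSup (linCSP uL '' argSet uO S) := rfl

lemma argSet_nonempty (uO : Fin m → Fin n → ℝ) {S : Set (Fin m × Fin n → ℝ)}
    (hK : IsCompact S) (hne : S.Nonempty) : (argSet uO S).Nonempty := by
  obtain ⟨φ, hφ, hmax⟩ := hK.exists_isMaxOn hne (linCSP_continuous uO).continuousOn
  exact ⟨φ, hφ, fun ψ hψ => hmax hψ⟩

lemma bddAbove_image (uL : Fin m → Fin n → ℝ) (istar : Fin m) (jstar : Fin n)
    (hA1 : ∀ p : Fin m × Fin n, p ≠ (istar, jstar) → uL p.1 p.2 < uL istar jstar)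
    {S : Set (Fin m × Fin n → ℝ)} (hS : S ⊆ stdSimplex ℝ (Fin m × Fin n)) :
    BddAbove (linCSP uL '' S) :=
  ⟨uL istar jstar, by
    rintro _ ⟨φ, hφ, rfl⟩; exact linCSP_le_max uL istar jstar hA1 (hS hφ)⟩

/-- The join of `M` with the point `φp`. -/
def joinSet (φp : Fin m × Fin n → ℝ) (M : Set (Fin m × Fin n → ℝ)) :
    Set (Fin m × Fin n → ℝ) :=
  (fun q : ℝ × (Fin m × Fin n → ℝ) => q.1 • φp + (1 - q.1) • q.2) ''
    (Set.Icc (0:ℝ) 1 ×ˢ M)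

lemma mem_joinSet {φp : Fin m × Fin n → ℝ} {M : Set (Fin m × Fin n → ℝ)}
    {χ : Fin m × Fin n → ℝ} :
    χ ∈ joinSet φp M ↔ ∃ t ∈ Set.Icc (0:ℝ) 1, ∃ ψ ∈ M, t • φp + (1 - t) • ψ = χ := by
  constructor
  · rintro ⟨⟨t, ψ⟩, ⟨ht, hψ⟩, rfl⟩; exact ⟨t, ht, ψ, hψ, rfl⟩
  · rintro ⟨t, ht, ψ, hψ, rfl⟩; exact ⟨(t, ψ), ⟨ht, hψ⟩, rfl⟩

lemma subset_joinSet (φp : Fin m × Fin n → ℝ) (M : Set (Fin m × Fin n → ℝ)) :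
    M ⊆ joinSet φp M := by
  intro ψ hψ
  exact mem_joinSet.mpr ⟨0, by norm_num, ψ, hψ, by simp⟩

lemma phip_mem_joinSet (φp : Fin m × Fin n → ℝ) {M : Set (Fin m × Fin n → ℝ)}
    (hne : M.Nonempty) : φp ∈ joinSet φp M := by
  obtain ⟨ψ, hψ⟩ := hne
  exact mem_joinSet.mpr ⟨1, by norm_num, ψ, hψ, by simp⟩

lemma joinSet_isCompact (φp : Fin m × Fin n → ℝ) {M : Set (Fin m × Fin n → ℝ)}
    (hK : IsCompact M) : IsCompact (joinSet φp M) := by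
  apply (isCompact_Icc.prod hK).image
  exact (continuous_fst.smul continuous_const).add
    ((continuous_const.sub continuous_fst).smul continuous_snd)

lemma joinSet_subset_simplex {φp : Fin m × Fin n → ℝ} {M : Set (Fin m × Fin n → ℝ)}
    (hφp : φp ∈ stdSimplex ℝ (Fin m × Fin n)) (hMs : M ⊆ stdSimplex ℝ (Fin m × Fin n)) :
    joinSet φp M ⊆ stdSimplex ℝ (Fin m × Fin n) := by
  intro χ hχ
  obtain ⟨t, ht, ψ, hψ, rfl⟩ := mem_joinSet.mp hχ
  exact (convex_stdSimplex ℝ _) hφp (hMs hψ) ht.1 (by linarith [ht.2]) (by ring)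

lemma joinSet_eq_convexJoin (φp : Fin m × Fin n → ℝ) (M : Set (Fin m × Fin n → ℝ)) :
    joinSet φp M = convexJoin ℝ {φp} M := by
  ext χ
  rw [mem_joinSet]
  constructor
  · rintro ⟨t, ht, ψ, hψ, rfl⟩
    exact mem_convexJoin.mpr ⟨φp, rfl, ψ, hψ,
      ⟨t, 1 - t, ht.1, by linarith [ht.2], by ring, rfl⟩⟩
  · intro h
    obtain ⟨x, hx, ψ, hψ, a, b, ha, hb, hab, hz⟩ := mem_convexJoin.mp h
    rcases hx with rfl
    exact ⟨a, ⟨ha, by linarith⟩, ψ, hψ, by rw [show (1:ℝ) - a = b by linarith]; exact hz⟩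

lemma joinSet_convex (φp : Fin m × Fin n → ℝ) {M : Set (Fin m × Fin n → ℝ)}
    (hMc : Convex ℝ M) : Convex ℝ (joinSet φp M) := by
  rw [joinSet_eq_convexJoin]
  exact (convex_singleton φp).convexJoin hMc

lemma VL_le_join (uL uO : Fin m → Fin n → ℝ) (istar : Fin m) (jstar : Fin n)
    (hA1 : ∀ p : Fin m × Fin n, p ≠ (istar, jstar) → uL p.1 p.2 < uL istar jstar)
    {M : Set (Fin m × Fin n → ℝ)} (hMs : M ⊆ stdSimplex ℝ (Fin m × Fin n))
    (hK : IsCompact M) (hne : M.Nonempty) :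
    VL uL uO M ≤ VL uL uO (joinSet (prodCSP (pureVec istar) (pureVec jstar)) M) := by
  set φp := prodCSP (pureVec istar) (pureVec jstar) with hφpdef
  have hφps : φp ∈ stdSimplex ℝ (Fin m × Fin n) := prodCSP_pure_mem istar jstar
  set M' := joinSet φp M with hM'def
  have hM's : M' ⊆ stdSimplex ℝ (Fin m × Fin n) := joinSet_subset_simplex hφps hMs
  obtain ⟨χ₀, hχ₀M, hχ₀max⟩ := argSet_nonempty uO hK hne
  -- bound on `uO` values over `M'`
  have hbnd : ∀ χ' ∈ M', linCSP uO χ' ≤ max (linCSP uO φp) (linCSP uO χ₀) := by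
    intro χ' hχ'
    obtain ⟨t, ht, ψ, hψ, rfl⟩ := mem_joinSet.mp hχ'
    rw [linCSP_comb]
    have h1 : linCSP uO ψ ≤ linCSP uO χ₀ := hχ₀max ψ hψ
    have h2 : linCSP uO φp ≤ max (linCSP uO φp) (linCSP uO χ₀) := le_max_left _ _
    have h3 : linCSP uO χ₀ ≤ max (linCSP uO φp) (linCSP uO χ₀) := le_max_right _ _
    nlinarith [ht.1, ht.2]
  rcases le_or_gt (linCSP uO χ₀) (linCSP uO φp) with hcase | hcase
  · -- φp is an optimizer-optimal point of M'
    have hφpArg : φp ∈ argSet uO M' := by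
      refine ⟨phip_mem_joinSet φp hne, fun χ' hχ' => ?_⟩
      exact (hbnd χ' hχ').trans (by rw [max_eq_left hcase])
    have h1 : VL uL uO M ≤ uL istar jstar := by
      rw [VL_eq]
      apply csSup_le ((argSet_nonempty uO hK hne).image _)
      rintro _ ⟨φ, hφ, rfl⟩
      exact linCSP_le_max uL istar jstar hA1 (hMs hφ.1)
    have h2 : uL istar jstar ≤ VL uL uO M' := by
      rw [VL_eq]
      have := le_csSup (bddAbove_image uL istar jstar hA1
        (fun φ hφ => hM's hφ.1 : argSet uO M' ⊆ stdSimplex ℝ (Fin m × Fin n)))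
        (Set.mem_image_of_mem (linCSP uL) hφpArg)
      rwa [linCSP_prodCSP_pure] at this
    exact h1.trans h2
  · -- the optimizer-optimal points of M are still optimal in M'
    have hsub : argSet uO M ⊆ argSet uO M' := by
      rintro χ ⟨hχM, hχmax⟩
      refine ⟨subset_joinSet φp M hχM, fun χ' hχ' => ?_⟩
      have hcc : linCSP uO χ₀ ≤ linCSP uO χ := hχmax χ₀ hχ₀M
      exact (hbnd χ' hχ').trans ((max_le hcase.le le_rfl).trans hcc)
    rw [VL_eq, VL_eq]
    exact csSup_le_csSup
      (bddAbove_image uL istar jstar hA1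
        (fun φ hφ => hM's hφ.1 : argSet uO M' ⊆ stdSimplex ℝ (Fin m × Fin n)))
      ((argSet_nonempty uO hK hne).image _)
      (Set.image_mono hsub)

end ParetoAux

open ParetoAux

/-- Assume (A1). Every Pareto-optimal menu has `M^+ = {φ^+}`, where
`φ^+ = e_{i*} ⊗ e_{j*}` is the unique learner-optimal pure profile. -/
theorem pareto_optimal_menu_max_set
    (m n : ℕ) (hm : 0 < m) (hn : 0 < n)
    (uL : Fin m → Fin n → ℝ) (hbound : ∀ i j, uL i j ∈ Set.Icc (-1 : ℝ) 1)
    (istar : Fin m) (jstar : Fin n)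
    (hA1 : ∀ p : Fin m × Fin n, p ≠ (istar, jstar) → uL p.1 p.2 < uL istar jstar)
    (M : Set (Fin m × Fin n → ℝ)) (hPO : ParetoOptimal uL M) :
    MplusSet uL M = {prodCSP (pureVec istar) (pureVec jstar)} := by
  classical
  set φp := prodCSP (pureVec istar) (pureVec jstar) with hφpdef
  have hφps : φp ∈ stdSimplex ℝ (Fin m × Fin n) := prodCSP_pure_mem istar jstar
  obtain ⟨⟨hcl, hcv, hMs, hresp⟩, hND⟩ := hPO
  have hK : IsCompact M := (isCompact_stdSimplex ℝ (Fin m × Fin n)).of_isClosed_subset hcl hMs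
  have hne : M.Nonempty := by
    obtain ⟨y, hy, hxy⟩ := hresp (pureVec ⟨0, hm⟩) (pureVec_mem _)
    exact ⟨_, hxy⟩
  -- Step 1: `φp ∈ M`.
  have hφpM : φp ∈ M := by
    by_contra hnot
    set M' := joinSet φp M with hM'def
    have hM's : M' ⊆ stdSimplex ℝ (Fin m × Fin n) := joinSet_subset_simplex hφps hMs
    have hM'menu : IsMenu M' := by
      refine ⟨(joinSet_isCompact φp hK).isClosed, joinSet_convex φp hcv, hM's, ?_⟩
      intro x hx
      obtain ⟨y, hy, hxy⟩ := hresp x hx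
      exact ⟨y, hy, subset_joinSet φp M hxy⟩
    refine hND M' hM'menu ⟨fun uO => VL_le_join uL uO istar jstar hA1 hMs hK hne, uL, ?_⟩
    -- strict improvement for `uO = uL`
    obtain ⟨χ₀, hχ₀M, hχ₀max⟩ := argSet_nonempty uL hK hne
    have hU : linCSP uL χ₀ < uL istar jstar := by
      refine lt_of_le_of_ne (linCSP_le_max uL istar jstar hA1 (hMs hχ₀M)) ?_
      intro heq
      rw [eq_phiplus_of_max uL istar jstar hA1 (hMs hχ₀M) heq] at hχ₀M
      exact hnot hχ₀M
    have h1 : VL uL uL M ≤ linCSP uL χ₀ := by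
      rw [VL_eq]
      apply csSup_le ((argSet_nonempty uL hK hne).image _)
      rintro _ ⟨φ, hφ, rfl⟩
      exact hχ₀max φ hφ.1
    have hφpArg : φp ∈ argSet uL M' := by
      refine ⟨phip_mem_joinSet φp hne, fun χ' hχ' => ?_⟩
      rw [hφpdef, linCSP_prodCSP_pure]
      exact linCSP_le_max uL istar jstar hA1 (hM's hχ')
    have h2 : uL istar jstar ≤ VL uL uL M' := by
      rw [VL_eq]
      have := le_csSup (bddAbove_image uL istar jstar hA1
        (fun φ hφ => hM's hφ.1 : argSet uL M' ⊆ stdSimplex ℝ (Fin m × Fin n)))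
        (Set.mem_image_of_mem (linCSP uL) hφpArg)
      rwa [hφpdef, linCSP_prodCSP_pure] at this
    calc VL uL uL M ≤ linCSP uL χ₀ := h1
      _ < uL istar jstar := hU
      _ ≤ VL uL uL M' := h2
  -- Step 2: `UplusVal uL M = uL istar jstar`.
  have hUplus : UplusVal uL M = uL istar jstar := by
    apply le_antisymm
    · apply csSup_le (hne.image _)
      rintro _ ⟨φ, hφ, rfl⟩
      exact linCSP_le_max uL istar jstar hA1 (hMs hφ)
    · have := le_csSup (bddAbove_image uL istar jstar hA1 hMs)
        (Set.mem_image_of_mem (linCSP uL) hφpM)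
      rwa [hφpdef, linCSP_prodCSP_pure] at this
  -- Conclusion.
  ext φ
  simp only [MplusSet, Set.mem_setOf_eq, Set.mem_singleton_iff]
  constructor
  · rintro ⟨hφM, hφval⟩
    exact eq_phiplus_of_max uL istar jstar hA1 (hMs hφM) (hφval.trans hUplus)
  · rintro rfl
    exact ⟨hφpM, (linCSP_prodCSP_pure uL istar jstar).trans hUplus.symm⟩
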